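/- For every k ≥ 0, E_k ⊆ Ē_k; that is, every extended type that occurs as etype(X_I) for a structure class X_I of deficiency k in some finite group G of even order lies in the feasible set Ē_k. -/

import Mathlib

/-- The minimum excludant of a set of natural numbers. -/
noncomputable def mex (S : Set ℕ) : ℕ := sInf {n : ℕ | n ∉ S}

open Classical in
/-- The nim-value of a position in the achievement game GEN(G): a position `P`
is terminal when it generates `G` (so its nim-value is `mex ∅ = 0`); otherwise
its options are the sets `insert g P` for `g ∉ P`. -/
noncomputable def gameNim {G : Type*} [Group G] [Fintype G] (P : Finset G) : ℕ :=
  if Subgroup.closure (P : Set G) = ⊤ then 0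
  else mex {n : ℕ | ∃ g : {g : G // g ∉ P}, gameNim (insert g.1 P) = n}
termination_by Pᶜ.card
decreasing_by
  exact Finset.card_lt_card (by
    constructor
    · intro x hx
      simp only [Finset.mem_compl, Finset.mem_insert] at hx ⊢
      exact fun h => hx (Or.inr h)
    · intro hsub
      have h1 : g.1 ∈ Pᶜ := Finset.mem_compl.mpr g.2
      have h2 : g.1 ∈ (insert g.1 P)ᶜ := hsub h1
      simp at h2)


/-- ⌈P⌉: the intersection of all maximal subgroups of `G` containing `P`
(equal to `G`, i.e. `⊤`, if no maximal subgroup contains `P`). -/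
def ceilSet {G : Type*} [Group G] (P : Set G) : Subgroup G :=
  sInf {M : Subgroup G | IsCoatom M ∧ P ⊆ (M : Set G)}

/-- The deficiency of a subset `S` of a finite group `G`: the minimum size of a
subset `Q` of `G` such that `S ∪ Q` generates `G`. -/
noncomputable def deficiency {G : Type*} [Group G] [Fintype G] (S : Set G) : ℕ :=
  sInf {n : ℕ | ∃ Q : Finset G, Q.card = n ∧ Subgroup.closure (S ∪ (Q : Set G)) = ⊤}

/-- The structure class `X_J` is an option of the structure class `X_I`. -/
def IsStructOption {G : Type*} [Group G] (I J : Subgroup G) : Prop :=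
  ∃ g ∉ I, ceilSet ((I : Set G) ∪ {g}) = J

/-- Extended types: quadruples `(p, e, o, s)`. -/
abbrev EType : Type := ℕ × ℕ × ℕ × ℕ

/-- `E_T`: the set of second components of a set of types. -/
def typeE (T : Set (ℕ × ℕ × ℕ)) : Set ℕ := {e : ℕ | ∃ t ∈ T, t.2.1 = e}

/-- `O_T`: the set of third components of a set of types. -/
def typeO (T : Set (ℕ × ℕ × ℕ)) : Set ℕ := {o : ℕ | ∃ t ∈ T, t.2.2 = o}

/-- `mex₀(T) = (0, e_T, mex(E_T ∪ {e_T}))` where `e_T = mex(O_T)`. -/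
noncomputable def mex0 (T : Set (ℕ × ℕ × ℕ)) : ℕ × ℕ × ℕ :=
  (0, mex (typeO T), mex (typeE T ∪ {mex (typeO T)}))

/-- `mex₁(T) = (1, mex(O_T ∪ {o_T}), o_T)` where `o_T = mex(E_T)`. -/
noncomputable def mex1 (T : Set (ℕ × ℕ × ℕ)) : ℕ × ℕ × ℕ :=
  (1, mex (typeO T ∪ {mex (typeE T)}), mex (typeE T))

/-- `π₁(A)`: the set of first coordinates. -/
def pi1 (A : Set EType) : Set ℕ := {p : ℕ | ∃ t ∈ A, t.1 = p}

/-- `π₄(A)`: the set of fourth coordinates. -/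
def pi4 (A : Set EType) : Set ℕ := {s : ℕ | ∃ t ∈ A, t.2.2.2 = s}

/-- `π̃₄(A)`: drop the fourth coordinate. -/
def dropPi4 (A : Set EType) : Set (ℕ × ℕ × ℕ) :=
  {u : ℕ × ℕ × ℕ | ∃ t ∈ A, (t.1, t.2.1, t.2.2.1) = u}

open Classical in
/-- `min(π₁(A))`, with the convention that it equals `1` when `A = ∅`. -/
noncomputable def minPi1 (A : Set EType) : ℕ := if A = ∅ then 1 else sInf (pi1 A)

/-- `emex₀(A,B) := (mex₀(π̃₄(A ∪ B)), 2)`. -/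
noncomputable def emex0 (A B : Set EType) : EType :=
  ((mex0 (dropPi4 (A ∪ B))).1, (mex0 (dropPi4 (A ∪ B))).2.1,
    (mex0 (dropPi4 (A ∪ B))).2.2, 2)

/-- `emex₁(A,B) := (mex₁(π̃₄(A ∪ B)), 1 − min(π₁(A)))`. -/
noncomputable def emex1 (A B : Set EType) : EType :=
  ((mex1 (dropPi4 (A ∪ B))).1, (mex1 (dropPi4 (A ∪ B))).2.1,
    (mex1 (dropPi4 (A ∪ B))).2.2, 1 - minPi1 A)

/-- `(A,B)` is 0-feasible. -/
def Feasible0 (A B : Set EType) : Prop := B ≠ ∅ ∧ 1 ∉ pi1 (A ∪ B)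

/-- `(A,B)` is 1-feasible. -/
def Feasible1 (A B : Set EType) : Prop :=
  B ≠ ∅ ∧ 0 ∈ pi1 (A ∪ B) ∧ (1 ∈ pi4 A → 0 ∈ pi1 A) ∧ (0 ∈ pi4 B → 0 ∉ pi1 A)

/-- The doubly indexed feasible sets `Ē_{k,l}` of extended types, with
`Ebarkl 0 l = Ē₀ = {(0,0,0,2)}` for every `l`. -/
noncomputable def Ebarkl : ℕ → ℕ → Set EType
  | 0, _ => {((0, 0, 0, 2) : EType)}
  | (k + 1), 0 =>
      {t : EType | ∃ B : Set EType, B ⊆ (⋃ l, Ebarkl k l) ∧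
        ((Feasible0 ∅ B ∧ t = emex0 ∅ B) ∨ (Feasible1 ∅ B ∧ t = emex1 ∅ B))}
  | (k + 1), (l + 1) =>
      {t : EType | ∃ A B : Set EType, A ⊆ Ebarkl (k + 1) l ∧
        B ⊆ (⋃ l, Ebarkl k l) ∧
        ((Feasible0 A B ∧ t = emex0 A B) ∨ (Feasible1 A B ∧ t = emex1 A B))}
  termination_by k l => (k, l)

/-- The feasible set `Ē_k = ⋃_l Ē_{k,l}`. -/
noncomputable def Ebar (k : ℕ) : Set EType := ⋃ l, Ebarkl k l

/-- `t` is the extended type of the structure class `X_I`: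
`t = (pty(|I|), e, o, s)` where `e` (resp. `o`) is the common nim-value of the
(existing) positions in `X_I` of even (resp. odd) cardinality, and `s` is the
smoothness of `X_I`. -/
def IsEtypeOf (G : Type) [Group G] [Fintype G] (I : Subgroup G) (t : EType) : Prop :=
  t.1 = Nat.card I % 2 ∧
  (∃ P : Finset G, ceilSet (P : Set G) = I ∧ Even P.card) ∧
  (∀ P : Finset G, ceilSet (P : Set G) = I → Even P.card → gameNim P = t.2.1) ∧
  (∃ P : Finset G, ceilSet (P : Set G) = I ∧ Odd P.card) ∧
  (∀ P : Finset G, ceilSet (P : Set G) = I → Odd P.card → gameNim P = t.2.2.1) ∧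
  (Even (Nat.card I) → t.2.2.2 = 2) ∧
  (Odd (Nat.card I) →
    ((∃ J : Subgroup G, IsStructOption I J ∧ Even (Nat.card J) ∧
        deficiency (J : Set G) = deficiency (I : Set G)) → t.2.2.2 = 1) ∧
    (¬ (∃ J : Subgroup G, IsStructOption I J ∧ Even (Nat.card J) ∧
        deficiency (J : Set G) = deficiency (I : Set G)) → t.2.2.2 = 0))

/-- `E_k`: the set of extended types occurring for structure classes of
deficiency `k` in finite groups of even order. -/
def Espec (k : ℕ) : Set EType :=
  {t : EType | ∃ (G : Type) (_ : Group G) (_ : Fintype G),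
    Even (Fintype.card G) ∧ ∃ I : Subgroup G,
      ceilSet (I : Set G) = I ∧ deficiency (I : Set G) = k ∧ IsEtypeOf G I t}

section Aux

open Subgroup

/-! ### mex lemmas -/

theorem mem_of_lt_mex {S : Set ℕ} {n : ℕ} (h : n < mex S) : n ∈ S := by
  by_contra hn
  have h2 := Nat.sInf_le (show n ∈ {m : ℕ | m ∉ S} from hn)
  unfold mex at h
  omega

theorem mex_not_mem {S : Set ℕ} (hS : S.Finite) : mex S ∉ S := by
  have hne : {m : ℕ | m ∉ S}.Nonempty := hS.infinite_compl.nonempty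
  exact Nat.sInf_mem hne

theorem mex_eq {S : Set ℕ} {k : ℕ} (h1 : k ∉ S) (h2 : ∀ n < k, n ∈ S) : mex S = k := by
  unfold mex
  refine le_antisymm (Nat.sInf_le h1) ?_
  refine le_csInf ⟨k, h1⟩ ?_
  intro m hm
  by_contra hmk
  exact hm (h2 m (by omega))

theorem mex_union_singleton {S : Set ℕ} (hS : S.Finite) {a : ℕ} (ha : a ≠ mex S) :
    mex (S ∪ {a}) = mex S :=
  mex_eq (by rintro (h | h); exact mex_not_mem hS h; exact ha (Set.mem_singleton_iff.mp h).symm)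
    (fun n hn => Or.inl (mem_of_lt_mex hn))

theorem mex_ne_of_mem {S : Set ℕ} (hS : S.Finite) {a : ℕ} (ha : a ∈ S) : mex S ≠ a :=
  fun h => mex_not_mem hS (h ▸ ha)

/-! ### ceilSet lemmas -/

variable {G : Type*} [Group G]

theorem subset_ceilSet (S : Set G) : S ⊆ (ceilSet S : Set G) := fun _ hx =>
  Subgroup.mem_sInf.mpr fun _ hM => hM.2 hx

theorem ceilSet_le {S : Set G} {M : Subgroup G} (hM : IsCoatom M) (h : S ⊆ (M : Set G)) :
    ceilSet S ≤ M := sInf_le ⟨hM, h⟩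

theorem ceilSet_eq_of_subset {S T : Set G} (h1 : S ⊆ T) (h2 : T ⊆ (ceilSet S : Set G)) :
    ceilSet T = ceilSet S := by
  unfold ceilSet
  congr 1
  ext M
  exact ⟨fun hM => ⟨hM.1, h1.trans hM.2⟩,
    fun hM => ⟨hM.1, h2.trans (SetLike.coe_subset_coe.mpr (ceilSet_le hM.1 hM.2))⟩⟩

theorem ceilSet_ceilSet (S : Set G) : ceilSet ((ceilSet S : Set G)) = ceilSet S :=
  ceilSet_eq_of_subset (subset_ceilSet S) subset_rfl

theorem ceilSet_union_singleton (S : Set G) (g : G) :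
    ceilSet (S ∪ {g}) = ceilSet ((ceilSet S : Set G) ∪ {g}) := by
  unfold ceilSet
  congr 1
  ext M
  constructor
  · rintro ⟨hM, hsub⟩
    refine ⟨hM, Set.union_subset ?_ fun x hx => hsub (Or.inr hx)⟩
    exact (SetLike.coe_subset_coe.mpr
      (ceilSet_le hM fun x hx => hsub (Or.inl hx)))
  · rintro ⟨hM, hsub⟩
    exact ⟨hM, Set.union_subset ((subset_ceilSet S).trans fun x hx => hsub (Or.inl hx))
      fun x hx => hsub (Or.inr hx)⟩

theorem closure_le_ceilSet (S : Set G) : Subgroup.closure S ≤ ceilSet S :=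
  (Subgroup.closure_le _).mpr (subset_ceilSet S)

variable [Fintype G]

theorem exists_coatom_of_ne_top {S : Set G} (h : Subgroup.closure S ≠ ⊤) :
    ∃ M : Subgroup G, IsCoatom M ∧ S ⊆ (M : Set G) := by
  rcases eq_top_or_exists_le_coatom (Subgroup.closure S) with h' | ⟨M, hM, hle⟩
  · exact absurd h' h
  · exact ⟨M, hM, (Subgroup.subset_closure).trans hle⟩

theorem ceilSet_eq_top_iff {S : Set G} : ceilSet S = ⊤ ↔ Subgroup.closure S = ⊤ := by
  constructor
  · intro h
    by_contra hc
    obtain ⟨M, hM, hsub⟩ := exists_coatom_of_ne_top hc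
    exact hM.1 (top_le_iff.mp (h ▸ ceilSet_le hM hsub))
  · intro h
    rw [eq_top_iff]
    calc (⊤ : Subgroup G) = Subgroup.closure S := h.symm
    _ ≤ ceilSet S := closure_le_ceilSet S

theorem closure_ceilSet_union_eq_top_iff {S X : Set G} :
    Subgroup.closure ((ceilSet S : Set G) ∪ X) = ⊤ ↔ Subgroup.closure (S ∪ X) = ⊤ := by
  constructor
  · intro h
    by_contra hc
    obtain ⟨M, hM, hsub⟩ := exists_coatom_of_ne_top hc
    have h1 : (ceilSet S : Set G) ∪ X ⊆ (M : Set G) :=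
      Set.union_subset
        (SetLike.coe_subset_coe.mpr (ceilSet_le hM fun x hx => hsub (Or.inl hx)))
        fun x hx => hsub (Or.inr hx)
    exact hM.1 (top_le_iff.mp (h ▸ (Subgroup.closure_le _).mpr h1))
  · intro h
    rw [eq_top_iff, ← h]
    exact Subgroup.closure_mono (Set.union_subset_union_left X (subset_ceilSet S))

end Aux

section Aux2

open Subgroup

variable {G : Type*} [Group G] [Fintype G]

/-! ### deficiency lemmas -/

theorem defSet_nonempty (S : Set G) :
    {n : ℕ | ∃ Q : Finset G, Q.card = n ∧ Subgroup.closure (S ∪ (Q : Set G)) = ⊤}.Nonempty := by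
  refine ⟨(Finset.univ : Finset G).card, Finset.univ, rfl, ?_⟩
  simp [Subgroup.closure_univ]

theorem deficiency_le {S : Set G} {Q : Finset G}
    (h : Subgroup.closure (S ∪ (Q : Set G)) = ⊤) : deficiency S ≤ Q.card :=
  Nat.sInf_le ⟨Q, rfl, h⟩

theorem exists_deficiency_witness (S : Set G) :
    ∃ Q : Finset G, Q.card = deficiency S ∧ Subgroup.closure (S ∪ (Q : Set G)) = ⊤ :=
  Nat.sInf_mem (defSet_nonempty S)

theorem deficiency_mono {S T : Set G} (h : S ⊆ T) : deficiency T ≤ deficiency S := by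
  obtain ⟨Q, hQ, htop⟩ := exists_deficiency_witness S
  rw [← hQ]
  refine deficiency_le ?_
  rw [eq_top_iff, ← htop]
  exact Subgroup.closure_mono (Set.union_subset_union_left _ h)

theorem deficiency_ceilSet (S : Set G) : deficiency ((ceilSet S : Set G)) = deficiency S := by
  unfold deficiency
  congr 1
  ext n
  constructor
  · rintro ⟨Q, hQ, htop⟩
    exact ⟨Q, hQ, closure_ceilSet_union_eq_top_iff.mp htop⟩
  · rintro ⟨Q, hQ, htop⟩
    exact ⟨Q, hQ, closure_ceilSet_union_eq_top_iff.mpr htop⟩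

theorem deficiency_le_union_singleton (S : Set G) (g : G) :
    deficiency S ≤ deficiency (S ∪ {g}) + 1 := by
  classical
  obtain ⟨Q, hQ, htop⟩ := exists_deficiency_witness (S ∪ {g})
  have h2 : Subgroup.closure (S ∪ ((insert g Q : Finset G) : Set G)) = ⊤ := by
    rw [show S ∪ ((insert g Q : Finset G) : Set G) = (S ∪ {g}) ∪ (Q : Set G) by
      ext x
      simp only [Set.mem_union, Finset.coe_insert, Set.mem_insert_iff, Set.mem_singleton_iff,
        Finset.mem_coe]
      tauto]
    exact htop
  calc deficiency S ≤ (insert g Q).card := deficiency_le h2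
  _ ≤ Q.card + 1 := Finset.card_insert_le g Q
  _ = deficiency (S ∪ {g}) + 1 := by rw [hQ]

theorem deficiency_eq_zero_iff {S : Set G} :
    deficiency S = 0 ↔ Subgroup.closure S = ⊤ := by
  constructor
  · intro h
    obtain ⟨Q, hQ, htop⟩ := exists_deficiency_witness S
    rw [h, Finset.card_eq_zero] at hQ
    subst hQ
    simpa using htop
  · intro h
    have : deficiency S ≤ (∅ : Finset G).card := deficiency_le (by simpa using h)
    simpa using this

theorem deficiency_coe_eq_zero_iff {I : Subgroup G} :
    deficiency (I : Set G) = 0 ↔ I = ⊤ := by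
  rw [deficiency_eq_zero_iff, Subgroup.closure_eq]

/-! ### structure options -/

theorem lt_ceil_union_singleton (I : Subgroup G) {g : G} (hg : g ∉ I) :
    I < ceilSet ((I : Set G) ∪ {g}) := by
  refine lt_of_le_of_ne (fun x hx => subset_ceilSet _ (Or.inl hx)) fun h =>
    hg (h ▸ subset_ceilSet ((I : Set G) ∪ {g}) (Or.inr rfl))

theorem card_lt_card_of_lt {H K : Subgroup G} (h : H < K) : Nat.card H < Nat.card K := by
  have := Set.ncard_lt_ncard (show (H : Set G) ⊂ K by exact_mod_cast h) (Set.toFinite _)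
  simpa [← Nat.card_coe_set_eq] using this

theorem card_subgroup_le (K : Subgroup G) : Nat.card K ≤ Fintype.card G :=
  calc Nat.card K ≤ Nat.card G := Nat.card_le_card_of_injective _ (Subgroup.subtype_injective _)
  _ = Fintype.card G := Nat.card_eq_fintype_card

/-- deficiency of an option is at most that of `I`. -/
theorem deficiency_option_le (I : Subgroup G) (g : G) :
    deficiency ((ceilSet ((I : Set G) ∪ {g}) : Subgroup G) : Set G) ≤ deficiency (I : Set G) := by
  rw [deficiency_ceilSet]
  exact deficiency_mono (Set.subset_union_left)

/-- deficiency of an option is at least `deficiency I - 1`. -/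
theorem deficiency_option_ge (I : Subgroup G) (g : G) :
    deficiency (I : Set G) ≤
      deficiency ((ceilSet ((I : Set G) ∪ {g}) : Subgroup G) : Set G) + 1 := by
  rw [deficiency_ceilSet]
  exact deficiency_le_union_singleton _ g

/-! ### The invariant nim-values of structure classes -/

open Classical in
noncomputable def EOaux (p : ℕ) (T : Set (ℕ × ℕ × ℕ)) : ℕ × ℕ :=
  if p = 0 then (mex (typeO T), mex (typeE T ∪ {mex (typeO T)}))
  else (mex (typeO T ∪ {mex (typeE T)}), mex (typeE T))

open Classical in
noncomputable def EO {G : Type*} [Group G] [Fintype G] (I : Subgroup G) : ℕ × ℕ :=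
  if I = ⊤ then (0, 0)
  else
    EOaux (Nat.card I % 2) (Set.range fun g : {g : G // g ∉ I} =>
      (Nat.card (ceilSet ((I : Set G) ∪ {(g : G)})) % 2,
        EO (ceilSet ((I : Set G) ∪ {(g : G)}))))
termination_by Fintype.card G - Nat.card I
decreasing_by
  have h1 : Nat.card I < Nat.card (ceilSet ((I : Set G) ∪ {(g : G)})) :=
    card_lt_card_of_lt (lt_ceil_union_singleton I g.2)
  have h2 := card_subgroup_le (ceilSet ((I : Set G) ∪ {(g : G)}))
  omega

/-- The set of types of the option classes of `I`. -/
noncomputable def optT (I : Subgroup G) : Set (ℕ × ℕ × ℕ) :=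
  Set.range fun g : {g : G // g ∉ I} =>
    (Nat.card (ceilSet ((I : Set G) ∪ {(g : G)})) % 2,
      EO (ceilSet ((I : Set G) ∪ {(g : G)})))

theorem EO_eq {I : Subgroup G} (hI : I ≠ ⊤) :
    EO I = EOaux (Nat.card I % 2) (optT I) := by
  rw [EO, if_neg hI]
  rfl

theorem EO_top : EO (⊤ : Subgroup G) = (0, 0) := by rw [EO]; simp

theorem optT_finite (I : Subgroup G) : (optT I).Finite := Set.finite_range _

theorem typeE_finite {T : Set (ℕ × ℕ × ℕ)} (hT : T.Finite) : (typeE T).Finite := by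
  have : typeE T = (fun t : ℕ × ℕ × ℕ => t.2.1) '' T := by
    ext e; simp [typeE, Set.mem_image, eq_comm]
  rw [this]; exact hT.image _

theorem typeO_finite {T : Set (ℕ × ℕ × ℕ)} (hT : T.Finite) : (typeO T).Finite := by
  have : typeO T = (fun t : ℕ × ℕ × ℕ => t.2.2) '' T := by
    ext e; simp [typeO, Set.mem_image, eq_comm]
  rw [this]; exact hT.image _

end Aux2

section Aux3

variable {G : Type*} [Group G] [Fintype G]

theorem typeE_optT (I : Subgroup G) :
    typeE (optT I) =
      {e | ∃ g : {g : G // g ∉ I}, (EO (ceilSet ((I : Set G) ∪ {(g : G)}))).1 = e} := by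
  ext e
  simp only [typeE, optT, Set.mem_range, Set.mem_setOf_eq]
  constructor
  · rintro ⟨t, ⟨g, rfl⟩, rfl⟩; exact ⟨g, rfl⟩
  · rintro ⟨g, rfl⟩; exact ⟨_, ⟨g, rfl⟩, rfl⟩

theorem typeO_optT (I : Subgroup G) :
    typeO (optT I) =
      {e | ∃ g : {g : G // g ∉ I}, (EO (ceilSet ((I : Set G) ∪ {(g : G)}))).2 = e} := by
  ext e
  simp only [typeO, optT, Set.mem_range, Set.mem_setOf_eq]
  constructor
  · rintro ⟨t, ⟨g, rfl⟩, rfl⟩; exact ⟨g, rfl⟩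
  · rintro ⟨g, rfl⟩; exact ⟨_, ⟨g, rfl⟩, rfl⟩

theorem card_lt_univ_of_not_mem {P : Finset G} {g : G} (hg : g ∉ P) :
    P.card < Fintype.card G := by
  rw [← Finset.card_univ]
  exact Finset.card_lt_card ⟨Finset.subset_univ P, fun h => hg (h (Finset.mem_univ g))⟩

theorem gameNim_eq_aux :
    ∀ n : ℕ, ∀ P : Finset G, Fintype.card G - P.card = n →
      gameNim P = if Even P.card then (EO (ceilSet (P : Set G))).1
        else (EO (ceilSet (P : Set G))).2 := by
  intro n
  induction n using Nat.strong_induction_on with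
  | _ n IH =>
  intro P hPn
  classical
  by_cases htop : Subgroup.closure (P : Set G) = ⊤
  · rw [gameNim, if_pos htop, ceilSet_eq_top_iff.mpr htop, EO_top]
    split <;> rfl
  · rw [gameNim, if_neg htop]
    set I : Subgroup G := ceilSet (P : Set G) with hIdef
    have hItop : I ≠ ⊤ := fun h => htop (ceilSet_eq_top_iff.mp h)
    have hPI : (P : Set G) ⊆ (I : Set G) := subset_ceilSet _
    set T : Set (ℕ × ℕ × ℕ) := optT I with hTdef
    set w : Subgroup G → ℕ :=
      (fun J : Subgroup G => if Even P.card then (EO J).2 else (EO J).1) with hwdef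
    -- nim values of moves
    have hmove : ∀ g : G, g ∉ P →
        gameNim (insert g P) = w (ceilSet ((insert g P : Finset G) : Set G)) := by
      intro g hg
      have hlt : Fintype.card G - (insert g P).card < n := by
        have h1 := card_lt_univ_of_not_mem hg
        rw [Finset.card_insert_of_notMem hg]
        omega
      rw [IH (Fintype.card G - (insert g P).card) hlt (insert g P) rfl]
      simp only [Finset.card_insert_of_notMem hg, Nat.even_add_one]
      by_cases hev : Even P.card <;> simp [hev, hwdef]
    have hceil_mem : ∀ g : G, g ∈ I → ceilSet ((insert g P : Finset G) : Set G) = I := by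
      intro g hgI
      refine ceilSet_eq_of_subset ?_ ?_
      · rw [Finset.coe_insert]; exact Set.subset_insert g (P : Set G)
      · rw [Finset.coe_insert]
        exact Set.insert_subset hgI hPI
    have hceil_not_mem : ∀ g : G, g ∉ I →
        ceilSet ((insert g P : Finset G) : Set G) = ceilSet ((I : Set G) ∪ {g}) := by
      intro g hgI
      have h1 : ((insert g P : Finset G) : Set G) = (P : Set G) ∪ {g} := by
        rw [Finset.coe_insert]
        ext x
        simp only [Set.mem_insert_iff, Set.mem_union, Set.mem_singleton_iff, Finset.mem_coe]
        tauto
      rw [h1, ceilSet_union_singleton, ← hIdef]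
    -- the set of nim values of the options
    have hset : {m : ℕ | ∃ g : {g : G // g ∉ P}, gameNim (insert g.1 P) = m} =
        {m : ℕ | ∃ g : {g : G // g ∉ I}, w (ceilSet ((I : Set G) ∪ {(g : G)})) = m} ∪
          {m : ℕ | ∃ x : G, x ∈ I ∧ x ∉ P ∧ w I = m} := by
      ext m
      constructor
      · rintro ⟨⟨g, hg⟩, hval⟩
        by_cases hgI : g ∈ I
        · right
          exact ⟨g, hgI, hg, by rw [← hval, hmove g hg, hceil_mem g hgI]⟩
        · left
          exact ⟨⟨g, hgI⟩, by rw [← hval, hmove g hg, hceil_not_mem g hgI]⟩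
      · rintro (⟨⟨g, hgI⟩, hval⟩ | ⟨x, hxI, hxP, hval⟩)
        · have hgP : g ∉ P := fun h => hgI (hPI h)
          exact ⟨⟨g, hgP⟩, by rw [hmove g hgP, hceil_not_mem g hgI]; exact hval⟩
        · exact ⟨⟨x, hxP⟩, by rw [hmove x hxP, hceil_mem x hxI]; exact hval⟩
    rw [hset]
    have hfirstE : {m : ℕ | ∃ g : {g : G // g ∉ I},
        w (ceilSet ((I : Set G) ∪ {(g : G)})) = m} =
        (if Even P.card then typeO T else typeE T) := by
      by_cases hev : Even P.card
      · rw [if_pos hev, hTdef, typeO_optT]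
        simp only [hwdef, if_pos hev]
      · rw [if_neg hev, hTdef, typeE_optT]
        simp only [hwdef, if_neg hev]
    rw [hfirstE]
    rw [EO_eq hItop, ← hTdef]
    by_cases hfull : ∀ x : G, x ∈ I → x ∈ P
    · -- P fills up I; the within-class option set is empty
      have hsnd : {m : ℕ | ∃ x : G, x ∈ I ∧ x ∉ P ∧ w I = m} = ∅ := by
        ext m; simp only [Set.mem_setOf_eq, Set.mem_empty_iff_false, iff_false]
        rintro ⟨x, hxI, hxP, _⟩; exact hxP (hfull x hxI)
      have hcard : P.card = Nat.card I := by
        have hPeq : (P : Set G) = (I : Set G) :=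
          Set.Subset.antisymm hPI fun x hx => hfull x hx
        rw [← Set.ncard_coe_finset, hPeq, ← Nat.card_coe_set_eq]
        rfl
      rw [hsnd, Set.union_empty]
      by_cases hev : Even P.card
      · have : Nat.card I % 2 = 0 := by
          rw [← hcard]; exact Nat.even_iff.mp hev
        rw [if_pos hev, if_pos hev, EOaux, if_pos this]
      · have : ¬ (Nat.card I % 2 = 0) := by
          rw [← hcard]; exact fun h => hev (Nat.even_iff.mpr h)
        rw [if_neg hev, if_neg hev, EOaux, if_neg this]
    · -- there is a move inside the class
      push_neg at hfull
      obtain ⟨x, hxI, hxP⟩ := hfull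
      have hsnd : {m : ℕ | ∃ x : G, x ∈ I ∧ x ∉ P ∧ w I = m} = {w I} := by
        ext m
        simp only [Set.mem_setOf_eq, Set.mem_singleton_iff]
        exact ⟨fun ⟨_, _, _, h⟩ => h.symm, fun h => ⟨x, hxI, hxP, h.symm⟩⟩
      rw [hsnd]
      have hTfin := optT_finite I
      have hEfin : (typeE T).Finite := typeE_finite hTfin
      have hOfin : (typeO T).Finite := typeO_finite hTfin
      by_cases hev : Even P.card
      · rw [if_pos hev]
        simp only [hwdef, if_pos hev, EO_eq hItop, ← hTdef]
        by_cases hIe : Nat.card I % 2 = 0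
        · rw [EOaux, if_pos hIe]
          exact mex_union_singleton hOfin
            (mex_ne_of_mem (hEfin.union (Set.finite_singleton _)) (Or.inr rfl))
        · rw [EOaux, if_neg hIe]
      · rw [if_neg hev]
        simp only [hwdef, if_neg hev, EO_eq hItop, ← hTdef]
        by_cases hIe : Nat.card I % 2 = 0
        · rw [EOaux, if_pos hIe]
        · rw [EOaux, if_neg hIe]
          exact mex_union_singleton hEfin
            (mex_ne_of_mem (hOfin.union (Set.finite_singleton _)) (Or.inr rfl))
    
theorem gameNim_eq (P : Finset G) :
    gameNim P = if Even P.card then (EO (ceilSet (P : Set G))).1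
      else (EO (ceilSet (P : Set G))).2 := by
  classical
  exact gameNim_eq_aux _ P rfl

end Aux3

section Aux4

variable {G : Type*} [Group G] [Fintype G]

theorem even_card_of_le {H K : Subgroup G} (h : H ≤ K) (hH : Even (Nat.card H)) :
    Even (Nat.card K) := by
  rw [even_iff_two_dvd] at hH ⊢
  exact hH.trans (Subgroup.card_dvd_of_le h)

theorem exists_orderTwo_of_even {K : Subgroup G} (hK : Even (Nat.card K)) :
    ∃ t : G, t ∈ K ∧ orderOf t = 2 := by
  haveI : Fact (Nat.Prime 2) := ⟨Nat.prime_two⟩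
  haveI : Fintype ↥K := Fintype.ofFinite _
  obtain ⟨x, hx⟩ := exists_prime_orderOf_dvd_card (G := ↥K) 2
    (by rw [← Nat.card_eq_fintype_card]; exact (even_iff_two_dvd).mp hK)
  exact ⟨(x : G), x.2, by
    rw [← hx]; exact orderOf_injective K.subtype (Subgroup.subtype_injective K) x⟩

theorem even_of_orderTwo_mem {K : Subgroup G} {t : G} (ht : orderOf t = 2) (h : t ∈ K) :
    Even (Nat.card K) := by
  rw [even_iff_two_dvd]
  have h1 : orderOf (⟨t, h⟩ : ↥K) = 2 := by
    rw [← ht]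
    exact (orderOf_injective K.subtype (Subgroup.subtype_injective K) ⟨t, h⟩).symm
  exact h1 ▸ orderOf_dvd_natCard _

theorem not_mem_of_orderTwo_of_odd {I : Subgroup G} {t : G} (ht : orderOf t = 2)
    (hI : ¬ Even (Nat.card I)) : t ∉ I := fun h => hI (even_of_orderTwo_mem ht h)

theorem exists_orderTwo (hG : Even (Fintype.card G)) : ∃ t : G, orderOf t = 2 := by
  haveI : Fact (Nat.Prime 2) := ⟨Nat.prime_two⟩
  exact exists_prime_orderOf_dvd_card 2 ((even_iff_two_dvd).mp hG)

end Aux4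

section Aux5

/-! ### Ebarkl equations and monotonicity -/

theorem Ebarkl_zero (l : ℕ) : Ebarkl 0 l = {((0, 0, 0, 2) : EType)} := by
  rw [Ebarkl]

theorem Ebarkl_succ_zero (k : ℕ) :
    Ebarkl (k + 1) 0 = {t : EType | ∃ B : Set EType, B ⊆ (⋃ l, Ebarkl k l) ∧
      ((Feasible0 ∅ B ∧ t = emex0 ∅ B) ∨ (Feasible1 ∅ B ∧ t = emex1 ∅ B))} := by
  rw [Ebarkl]

theorem Ebarkl_succ_succ (k l : ℕ) :
    Ebarkl (k + 1) (l + 1) = {t : EType | ∃ A B : Set EType, A ⊆ Ebarkl (k + 1) l ∧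
      B ⊆ (⋃ l, Ebarkl k l) ∧
      ((Feasible0 A B ∧ t = emex0 A B) ∨ (Feasible1 A B ∧ t = emex1 A B))} := by
  rw [Ebarkl]

theorem Ebarkl_mono_succ (k l : ℕ) : Ebarkl (k + 1) l ⊆ Ebarkl (k + 1) (l + 1) := by
  induction l with
  | zero =>
    intro t ht
    rw [Ebarkl_succ_zero] at ht
    obtain ⟨B, hB, hc⟩ := ht
    rw [Ebarkl_succ_succ]
    exact ⟨∅, B, Set.empty_subset _, hB, hc⟩
  | succ l ih =>
    intro t ht
    rw [Ebarkl_succ_succ] at ht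
    obtain ⟨A, B, hA, hB, hc⟩ := ht
    rw [Ebarkl_succ_succ]
    exact ⟨A, B, hA.trans ih, hB, hc⟩

theorem Ebarkl_mono (k : ℕ) {l l' : ℕ} (h : l ≤ l') : Ebarkl k l ⊆ Ebarkl k l' := by
  cases k with
  | zero => rw [Ebarkl_zero, Ebarkl_zero]
  | succ k =>
    induction l' with
    | zero =>
      have hl : l = 0 := Nat.le_zero.mp h
      subst hl
      exact subset_rfl
    | succ l' ih =>
      rcases Nat.lt_or_ge l (l' + 1) with h1 | h2
      · exact (ih (by omega)).trans (Ebarkl_mono_succ k l')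
      · have hl : l = l' + 1 := by omega
        subst hl
        exact subset_rfl

end Aux5

section Aux6

variable {G : Type*} [Group G]

theorem ceilSet_mono {S T : Set G} (h : S ⊆ T) : ceilSet S ≤ ceilSet T := by
  apply sInf_le_sInf
  rintro M ⟨hM, hsub⟩
  exact ⟨hM, h.trans hsub⟩

variable [Fintype G]

theorem structOption_lt {I J : Subgroup G} (h : IsStructOption I J) : I < J := by
  obtain ⟨g, hg, rfl⟩ := h
  exact lt_ceil_union_singleton I hg

theorem structOption_ceil {I J : Subgroup G} (h : IsStructOption I J) :
    ceilSet (J : Set G) = J := by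
  obtain ⟨g, hg, rfl⟩ := h
  exact ceilSet_ceilSet _

theorem structOption_def_le {I J : Subgroup G} (h : IsStructOption I J) :
    deficiency (J : Set G) ≤ deficiency (I : Set G) := by
  obtain ⟨g, hg, rfl⟩ := h
  exact deficiency_option_le I g

theorem structOption_def_ge {I J : Subgroup G} (h : IsStructOption I J) :
    deficiency (I : Set G) ≤ deficiency (J : Set G) + 1 := by
  obtain ⟨g, hg, rfl⟩ := h
  exact deficiency_option_ge I g

/-- An option through an element of a structure subgroup `K ⊇ I` has deficiency
at least that of `K`. -/
theorem deficiency_union_singleton_ge_of_mem {I K : Subgroup G} {u : G} (hIK : I ≤ K)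
    (huK : u ∈ K) (hK : ceilSet (K : Set G) = K) :
    deficiency (K : Set G) ≤ deficiency ((ceilSet ((I : Set G) ∪ {u}) : Subgroup G) : Set G) := by
  have h1 : ceilSet ((I : Set G) ∪ {u}) ≤ K := by
    rw [← hK]
    exact ceilSet_mono (Set.union_subset (SetLike.coe_subset_coe.mpr hIK)
      (Set.singleton_subset_iff.mpr huK))
  exact deficiency_mono (SetLike.coe_subset_coe.mpr h1)

/-- Key lemma: if `J` is an option of `I`, `K` is an option of `I` with the same deficiency
as `I`, and `u ∈ K`, then the option of `J` through `u` has deficiency at least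
`deficiency J`, provided `deficiency I = deficiency J + 1`. -/
theorem key_nested {I J K : Subgroup G} {g u : G} (hg : g ∉ I)
    (hJ : ceilSet ((I : Set G) ∪ {g}) = J)
    (hK : IsStructOption I K) (huK : u ∈ K)
    (hdK : deficiency (I : Set G) ≤ deficiency (K : Set G)) :
    deficiency (I : Set G) ≤ deficiency ((J : Set G) ∪ {u}) + 1 := by
  classical
  obtain ⟨Q, hQc, hQtop⟩ := exists_deficiency_witness ((J : Set G) ∪ {u})
  -- closure ((I ∪ {g}) ∪ ({u} ∪ Q)) = ⊤
  have h1 : Subgroup.closure (((I : Set G) ∪ {g}) ∪ ({u} ∪ (Q : Set G))) = ⊤ := by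
    rw [← closure_ceilSet_union_eq_top_iff (S := (I : Set G) ∪ {g}), hJ]
    rw [show (J : Set G) ∪ ({u} ∪ (Q : Set G)) = ((J : Set G) ∪ {u}) ∪ (Q : Set G) by
      rw [Set.union_assoc]]
    exact hQtop
  have h2 : Subgroup.closure (((I : Set G) ∪ {u}) ∪ ((insert g Q : Finset G) : Set G)) = ⊤ := by
    rw [show ((I : Set G) ∪ {u}) ∪ ((insert g Q : Finset G) : Set G) =
        ((I : Set G) ∪ {g}) ∪ ({u} ∪ (Q : Set G)) by
      ext x
      simp only [Set.mem_union, Finset.coe_insert, Set.mem_insert_iff, Set.mem_singleton_iff,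
        Finset.mem_coe]
      tauto]
    exact h1
  have h3 : deficiency ((I : Set G) ∪ {u}) ≤ deficiency ((J : Set G) ∪ {u}) + 1 := by
    calc deficiency ((I : Set G) ∪ {u}) ≤ (insert g Q).card := deficiency_le h2
    _ ≤ Q.card + 1 := Finset.card_insert_le _ _
    _ = deficiency ((J : Set G) ∪ {u}) + 1 := by rw [hQc]
  have h4 : deficiency (K : Set G) ≤ deficiency ((I : Set G) ∪ {u}) := by
    have := deficiency_union_singleton_ge_of_mem (le_of_lt (structOption_lt hK)) huK
      (structOption_ceil hK)
    rwa [deficiency_ceilSet] at this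
  omega

open Classical in
/-- The smoothness value of a structure subgroup. -/
noncomputable def sval (I : Subgroup G) : ℕ :=
  if Nat.card I % 2 = 0 then 2
  else if ∃ J : Subgroup G, IsStructOption I J ∧ Even (Nat.card J) ∧
      deficiency (J : Set G) = deficiency (I : Set G) then 1 else 0

/-- The extended type of the structure class of a structure subgroup. -/
noncomputable def et (I : Subgroup G) : EType :=
  (Nat.card I % 2, (EO I).1, (EO I).2, sval I)

theorem dropPi4_opts (I : Subgroup G) :
    dropPi4 {t : EType | ∃ J : Subgroup G, IsStructOption I J ∧ et J = t} = optT I := by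
  ext u
  simp only [dropPi4, Set.mem_setOf_eq, optT, Set.mem_range]
  constructor
  · rintro ⟨t, ⟨J, ⟨g, hg, hJ⟩, rfl⟩, rfl⟩
    exact ⟨⟨g, hg⟩, by rw [hJ]; rfl⟩
  · rintro ⟨⟨g, hg⟩, rfl⟩
    exact ⟨et (ceilSet ((I : Set G) ∪ {g})), ⟨ceilSet ((I : Set G) ∪ {g}), ⟨g, hg, rfl⟩, rfl⟩, rfl⟩

theorem et_top (hG : Even (Fintype.card G)) : et (⊤ : Subgroup G) = ((0, 0, 0, 2) : EType) := by
  have hc : Nat.card (⊤ : Subgroup G) % 2 = 0 := by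
    rw [Subgroup.card_top, Nat.card_eq_fintype_card]
    exact Nat.even_iff.mp hG
  rw [et, EO_top, sval, if_pos hc, hc]

theorem et_mem_aux (hG : Even (Fintype.card G)) :
    ∀ n : ℕ, ∀ I : Subgroup G, ceilSet (I : Set G) = I →
      deficiency (I : Set G) * (Fintype.card G + 1) + (Fintype.card G - Nat.card I) = n →
      et I ∈ Ebarkl (deficiency (I : Set G)) (Fintype.card G - Nat.card I) := by
  intro n
  induction n using Nat.strong_induction_on with
  | _ n IH =>
  intro I hIceil hn
  classical
  by_cases hItop : I = ⊤
  · subst hItop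
    have hd : deficiency ((⊤ : Subgroup G) : Set G) = 0 := deficiency_coe_eq_zero_iff.mpr rfl
    rw [hd, Ebarkl_zero, et_top hG]
    rfl
  · -- I is a proper structure subgroup
    have hk0 : deficiency (I : Set G) ≠ 0 := fun h => hItop (deficiency_coe_eq_zero_iff.mp h)
    obtain ⟨k', hk'⟩ : ∃ k', deficiency (I : Set G) = k' + 1 :=
      ⟨deficiency (I : Set G) - 1, by omega⟩
    have hcardlt : Nat.card I < Fintype.card G := by
      have h1 : I < ⊤ := lt_top_iff_ne_top.mpr hItop
      have h2 := card_lt_card_of_lt h1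
      rw [Subgroup.card_top] at h2
      have h3 : Nat.card G = Fintype.card G := Nat.card_eq_fintype_card
      omega
    obtain ⟨m', hm'⟩ : ∃ m', Fintype.card G - Nat.card I = m' + 1 :=
      ⟨Fintype.card G - Nat.card I - 1, by omega⟩
    -- the induction hypothesis for options
    have hIH : ∀ J : Subgroup G, IsStructOption I J →
        et J ∈ Ebarkl (deficiency (J : Set G)) (Fintype.card G - Nat.card J) := by
      intro J hJ
      have h1 := structOption_def_le hJ
      have h2 := card_lt_card_of_lt (structOption_lt hJ)
      have h3 := card_subgroup_le J
      refine IH _ ?_ J (structOption_ceil hJ) rfl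
      rw [← hn]
      rcases eq_or_lt_of_le h1 with he | hl
      · rw [he]; omega
      · have h4 : (deficiency (J : Set G) + 1) * (Fintype.card G + 1) ≤
            deficiency (I : Set G) * (Fintype.card G + 1) := Nat.mul_le_mul_right _ hl
        have h5 : (deficiency (J : Set G) + 1) * (Fintype.card G + 1) =
            deficiency (J : Set G) * (Fintype.card G + 1) + (Fintype.card G + 1) := by ring
        omega
    -- the deficiency of any option is k' or k' + 1
    have hrange : ∀ J : Subgroup G, IsStructOption I J →
        deficiency (J : Set G) = k' ∨ deficiency (J : Set G) = k' + 1 := by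
      intro J hJ
      have h1 := structOption_def_le hJ
      have h2 := structOption_def_ge hJ
      omega
    set A : Set EType := {t : EType | ∃ J : Subgroup G, IsStructOption I J ∧
      deficiency (J : Set G) = k' + 1 ∧ et J = t} with hAdef
    set B : Set EType := {t : EType | ∃ J : Subgroup G, IsStructOption I J ∧
      deficiency (J : Set G) = k' ∧ et J = t} with hBdef
    have hAB : A ∪ B = {t : EType | ∃ J : Subgroup G, IsStructOption I J ∧ et J = t} := by
      ext t
      constructor
      · rintro (⟨J, hJ, _, rfl⟩ | ⟨J, hJ, _, rfl⟩) <;> exact ⟨J, hJ, rfl⟩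
      · rintro ⟨J, hJ, rfl⟩
        rcases hrange J hJ with h | h
        · exact Or.inr ⟨J, hJ, h, rfl⟩
        · exact Or.inl ⟨J, hJ, h, rfl⟩
    have hdrop : dropPi4 (A ∪ B) = optT I := by rw [hAB, dropPi4_opts]
    have hA : A ⊆ Ebarkl (k' + 1) m' := by
      rintro t ⟨J, hJ, hdJ, rfl⟩
      have h1 := hIH J hJ
      rw [hdJ] at h1
      refine Ebarkl_mono (k' + 1) ?_ h1
      have h2 := card_lt_card_of_lt (structOption_lt hJ)
      omega
    have hB : B ⊆ ⋃ l, Ebarkl k' l := by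
      rintro t ⟨J, hJ, hdJ, rfl⟩
      have h1 := hIH J hJ
      rw [hdJ] at h1
      exact Set.mem_iUnion.mpr ⟨_, h1⟩
    -- B is nonempty
    have hBne : B ≠ ∅ := by
      obtain ⟨Q, hQc, hQtop⟩ := exists_deficiency_witness (I : Set G)
      have hgex : ∃ g ∈ Q, g ∉ I := by
        by_contra hno
        push_neg at hno
        apply hItop
        rw [← Subgroup.closure_eq I, eq_top_iff, ← hQtop]
        apply Subgroup.closure_mono
        apply Set.union_subset subset_rfl
        intro x hx
        exact hno x hx
      obtain ⟨g, hgQ, hgI⟩ := hgex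
      set J := ceilSet ((I : Set G) ∪ {g}) with hJdef
      have hdle : deficiency (J : Set G) ≤ k' := by
        have hJd : deficiency (J : Set G) = deficiency ((I : Set G) ∪ {g}) := by
          rw [hJdef]; exact deficiency_ceilSet _
        have htop2 : Subgroup.closure (((I : Set G) ∪ {g}) ∪ ((Q.erase g : Finset G) : Set G))
            = ⊤ := by
          rw [show ((I : Set G) ∪ {g}) ∪ ((Q.erase g : Finset G) : Set G) =
              (I : Set G) ∪ (Q : Set G) by
            ext x
            simp only [Set.mem_union, Set.mem_singleton_iff, Finset.coe_erase,
              Set.mem_diff, Finset.mem_coe]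
            constructor
            · rintro ((h | rfl) | ⟨h, _⟩)
              · exact Or.inl h
              · exact Or.inr hgQ
              · exact Or.inr h
            · rintro (h | h)
              · exact Or.inl (Or.inl h)
              · by_cases hxg : x = g
                · exact Or.inl (Or.inr hxg)
                · exact Or.inr ⟨h, by simp [hxg]⟩]
          exact hQtop
        have h6 := deficiency_le htop2
        rw [Finset.card_erase_of_mem hgQ] at h6
        omega
      have hdge : k' ≤ deficiency (J : Set G) := by
        have h8 := deficiency_option_ge I g
        have h7 : deficiency ((ceilSet ((I : Set G) ∪ {g}) : Subgroup G) : Set G) =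
            deficiency (J : Set G) := by rw [hJdef]
        omega
      rw [← Set.nonempty_iff_ne_empty]
      exact ⟨et J, J, ⟨g, hgI, rfl⟩, le_antisymm hdle hdge, rfl⟩
    -- every option has even order if I has even order
    rw [hk', hm', Ebarkl_succ_succ]
    by_cases hIe : Nat.card I % 2 = 0
    · -- even case : use emex0
      refine ⟨A, B, hA, hB, Or.inl ⟨⟨hBne, ?_⟩, ?_⟩⟩
      · -- 1 ∉ pi1 (A ∪ B)
        rintro ⟨t, htAB, ht1⟩
        rw [hAB] at htAB
        obtain ⟨J, hJ, rfl⟩ := htAB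
        have hdvd : Nat.card I ∣ Nat.card J :=
          Subgroup.card_dvd_of_le (le_of_lt (structOption_lt hJ))
        have : Nat.card J % 2 = 0 := by
          rw [← Nat.even_iff] at hIe ⊢
          exact even_card_of_le (le_of_lt (structOption_lt hJ)) hIe
        rw [et] at ht1
        simp only at ht1
        omega
      · -- et I = emex0 A B
        have h1 : EO I = (mex (typeO (optT I)), mex (typeE (optT I) ∪ {mex (typeO (optT I))}))
            := by rw [EO_eq hItop, hIe, EOaux, if_pos rfl]
        rw [et, h1, sval, if_pos hIe, emex0, mex0, hdrop, hIe]
    · -- odd case : use emex1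
      have hIodd : ¬ Even (Nat.card I) := fun h => hIe (Nat.even_iff.mp h)
      -- an even option exists
      obtain ⟨t0, ht0⟩ := exists_orderTwo hG
      have ht0I : t0 ∉ I := not_mem_of_orderTwo_of_odd ht0 hIodd
      set K0 : Subgroup G := ceilSet ((I : Set G) ∪ {t0}) with hK0def
      have hK0opt : IsStructOption I K0 := ⟨t0, ht0I, rfl⟩
      have hK0even : Even (Nat.card K0) :=
        even_of_orderTwo_mem ht0 (subset_ceilSet _ (Or.inr rfl))
      refine ⟨A, B, hA, hB, Or.inr ⟨⟨hBne, ?_, ?_, ?_⟩, ?_⟩⟩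
      · -- 0 ∈ pi1 (A ∪ B)
        refine ⟨et K0, ?_, by rw [et]; exact Nat.even_iff.mp hK0even⟩
        rw [hAB]
        exact ⟨K0, hK0opt, rfl⟩
      · -- 1 ∈ pi4 A → 0 ∈ pi1 A
        rintro ⟨t, htA, ht4⟩
        obtain ⟨J, hJopt, hdJ, rfl⟩ := htA
        rw [et] at ht4
        simp only at ht4
        -- sval J = 1 means J is odd and has an even option of equal deficiency
        rw [sval] at ht4
        by_cases hJe : Nat.card J % 2 = 0
        · rw [if_pos hJe] at ht4; omega
        rw [if_neg hJe] at ht4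
        by_cases hex : ∃ J' : Subgroup G, IsStructOption J J' ∧ Even (Nat.card J') ∧
            deficiency (J' : Set G) = deficiency (J : Set G)
        · obtain ⟨J', hJ'opt, hJ'even, hJ'def⟩ := hex
          obtain ⟨u, huJ', hu2⟩ := exists_orderTwo_of_even hJ'even
          have huI : u ∉ I := not_mem_of_orderTwo_of_odd hu2 hIodd
          set K : Subgroup G := ceilSet ((I : Set G) ∪ {u}) with hKdef
          have hKopt : IsStructOption I K := ⟨u, huI, rfl⟩
          have hKeven : Even (Nat.card K) :=
            even_of_orderTwo_mem hu2 (subset_ceilSet _ (Or.inr rfl))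
          have hKdef_eq : deficiency (K : Set G) = k' + 1 := by
            have hle : deficiency (K : Set G) ≤ k' + 1 := by
              rw [← hk']; exact structOption_def_le hKopt
            have hge : deficiency (J' : Set G) ≤ deficiency (K : Set G) := by
              apply deficiency_union_singleton_ge_of_mem
                (le_trans (le_of_lt (structOption_lt hJopt))
                  (le_of_lt (structOption_lt hJ'opt))) huJ' (structOption_ceil hJ'opt)
            rw [hJ'def, hdJ] at hge
            omega
          exact ⟨et K, ⟨K, hKopt, hKdef_eq, rfl⟩, by
            rw [et]; exact Nat.even_iff.mp hKeven⟩
        · rw [if_neg hex] at ht4; omega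
      · -- 0 ∈ pi4 B → 0 ∉ pi1 A
        rintro ⟨t, htB, ht4⟩ ⟨t', ht'A, ht'1⟩
        obtain ⟨J, hJopt, hdJ, rfl⟩ := htB
        obtain ⟨K, hKopt, hdK, rfl⟩ := ht'A
        rw [et] at ht4 ht'1
        simp only at ht4 ht'1
        -- K is an even option of deficiency k' + 1
        have hKeven : Even (Nat.card K) := Nat.even_iff.mpr ht'1
        obtain ⟨u, huK, hu2⟩ := exists_orderTwo_of_even hKeven
        -- J is odd with sval J = 0
        rw [sval] at ht4
        by_cases hJe : Nat.card J % 2 = 0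
        · rw [if_pos hJe] at ht4; omega
        rw [if_neg hJe] at ht4
        by_cases hex : ∃ J' : Subgroup G, IsStructOption J J' ∧ Even (Nat.card J') ∧
            deficiency (J' : Set G) = deficiency (J : Set G)
        · rw [if_pos hex] at ht4; omega
        · -- construct an even option of J of deficiency k'
          apply hex
          have huJ : u ∉ J :=
            not_mem_of_orderTwo_of_odd hu2 (fun h => hJe (Nat.even_iff.mp h))
          obtain ⟨g, hgI, hgJ⟩ := hJopt
          set L : Subgroup G := ceilSet ((J : Set G) ∪ {u}) with hLdef
          refine ⟨L, ⟨u, huJ, rfl⟩, even_of_orderTwo_mem hu2 (subset_ceilSet _ (Or.inr rfl)), ?_⟩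
          have hLle : deficiency (L : Set G) ≤ deficiency (J : Set G) := by
            rw [hLdef, deficiency_ceilSet]
            exact deficiency_mono Set.subset_union_left
          have hLge : deficiency (J : Set G) ≤ deficiency (L : Set G) := by
            rw [hLdef, deficiency_ceilSet]
            have := key_nested hgI hgJ hKopt huK (by rw [hk', hdK])
            rw [hk'] at this
            rw [hdJ]
            omega
          omega
      · -- et I = emex1 A B
        have h1 : EO I = (mex (typeO (optT I) ∪ {mex (typeE (optT I))}), mex (typeE (optT I)))
            := by rw [EO_eq hItop, EOaux, if_neg hIe]
        have hp : Nat.card I % 2 = 1 := Nat.mod_two_eq_zero_or_one _ |>.resolve_left hIe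
        have hmin : minPi1 A = (if ∃ J : Subgroup G, IsStructOption I J ∧ Even (Nat.card J) ∧
            deficiency (J : Set G) = deficiency (I : Set G) then 0 else 1) := by
          by_cases hex : ∃ J : Subgroup G, IsStructOption I J ∧ Even (Nat.card J) ∧
              deficiency (J : Set G) = deficiency (I : Set G)
          · rw [if_pos hex]
            obtain ⟨J, hJopt, hJeven, hJdef⟩ := hex
            have hJA : et J ∈ A := ⟨J, hJopt, by rw [hJdef, hk'], rfl⟩
            have hAne : A ≠ ∅ := by
              rw [← Set.nonempty_iff_ne_empty]; exact ⟨et J, hJA⟩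
            rw [minPi1, if_neg hAne]
            apply Nat.sInf_eq_zero.mpr
            exact Or.inl ⟨et J, hJA, by rw [et]; exact Nat.even_iff.mp hJeven⟩
          · rw [if_neg hex]
            by_cases hAe : A = ∅
            · rw [minPi1, if_pos hAe]
            · rw [minPi1, if_neg hAe]
              have hpi : pi1 A = {1} := by
                ext p
                simp only [pi1, Set.mem_setOf_eq, Set.mem_singleton_iff]
                constructor
                · rintro ⟨t, htA, rfl⟩
                  obtain ⟨J, hJopt, hdJ, rfl⟩ := htA
                  rw [et]
                  simp only
                  rcases Nat.mod_two_eq_zero_or_one (Nat.card J) with h | h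
                  · exfalso
                    exact hex ⟨J, hJopt, Nat.even_iff.mpr h, by rw [hdJ, hk']⟩
                  · exact h
                · rintro rfl
                  obtain ⟨t, htA⟩ := Set.nonempty_iff_ne_empty.mpr hAe
                  obtain ⟨J, hJopt, hdJ, rfl⟩ := htA
                  refine ⟨et J, ⟨J, hJopt, hdJ, rfl⟩, ?_⟩
                  rw [et]
                  simp only
                  rcases Nat.mod_two_eq_zero_or_one (Nat.card J) with h | h
                  · exfalso
                    exact hex ⟨J, hJopt, Nat.even_iff.mpr h, by rw [hdJ, hk']⟩
                  · exact h
              rw [hpi, csInf_singleton]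
        rw [et, h1, sval, if_neg hIe, emex1, mex1, hdrop, hp, hmin]
        by_cases hex : ∃ J : Subgroup G, IsStructOption I J ∧ Even (Nat.card J) ∧
            deficiency (J : Set G) = deficiency (I : Set G)
        · rw [if_pos hex, if_pos hex]
        · rw [if_neg hex, if_neg hex]

theorem et_mem (hG : Even (Fintype.card G)) (I : Subgroup G) (hIceil : ceilSet (I : Set G) = I) :
    et I ∈ Ebarkl (deficiency (I : Set G)) (Fintype.card G - Nat.card I) :=
  et_mem_aux hG _ I hIceil rfl

end Aux6



/-- Every extended type that actually occurs with deficiency `k` in a finite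
group of even order is feasible: `E_k ⊆ Ē_k`. -/
theorem Espec_subset_Ebar (k : ℕ) : Espec k ⊆ Ebar k := by
  rintro t ⟨G, _, _, hG, I, hIceil, hIdef, hEt⟩
  obtain ⟨hp, ⟨P₀, hP₀ceil, hP₀even⟩, heven, ⟨P₁, hP₁ceil, hP₁odd⟩, hodd, hs2, hs01⟩ := hEt
  have he : t.2.1 = (EO I).1 := by
    have h1 := heven P₀ hP₀ceil hP₀even
    have h2 := gameNim_eq P₀
    rw [if_pos hP₀even, hP₀ceil] at h2
    rw [← h1, h2]
  have ho : t.2.2.1 = (EO I).2 := by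
    have h1 := hodd P₁ hP₁ceil hP₁odd
    have h2 := gameNim_eq P₁
    rw [if_neg (by exact (Nat.not_even_iff_odd).mpr hP₁odd), hP₁ceil] at h2
    rw [← h1, h2]
  have hs : t.2.2.2 = sval I := by
    rw [sval]
    by_cases hIe : Nat.card I % 2 = 0
    · rw [if_pos hIe]
      exact hs2 (Nat.even_iff.mpr hIe)
    · rw [if_neg hIe]
      have hIo : Odd (Nat.card I) := by
        rcases Nat.mod_two_eq_zero_or_one (Nat.card I) with h | h
        · exact absurd h hIe
        · exact Nat.odd_iff.mpr h
      obtain ⟨c1, c0⟩ := hs01 hIo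
      by_cases hex : ∃ J : Subgroup G, IsStructOption I J ∧ Even (Nat.card J) ∧
          deficiency (J : Set G) = deficiency (I : Set G)
      · rw [if_pos hex]; exact c1 hex
      · rw [if_neg hex]; exact c0 hex
  have ht : t = et I := by
    rw [et, ← hp, ← he, ← ho, ← hs]
  rw [ht]
  have hmem := et_mem hG I hIceil
  rw [hIdef] at hmem
  exact Set.mem_iUnion.mpr ⟨_, hmem⟩
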